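/- arXiv:0911.2935 — 2 statements merged into one kernel-verified Lean document; each statement's English description precedes it below -/
import Mathlib

section
/- For m ≥ 2, ω = e^{2πi/m}, and 1 ≤ j ≤ m−1, there exists a constant c₃ (depending only on m) such that for all n ≥ 1, |C_n(ω^j)| ≤ c₃ · C(2⌊n/v⌋ + 1, ⌊n/v⌋), where v = m/gcd(j,m) and C_n(q) is the q-Catalan polynomial. -/
open Finset Polynomial Complex

/-- The `q`-integer `[t]_q = 1 + q + ⋯ + q^{t-1}` as a complex polynomial. -/
noncomputable def qInt (t : ℕ) : Polynomial ℂ :=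
  ∑ i ∈ Finset.range t, Polynomial.X ^ i

/-- The `q`-factorial `[n]_q! = ∏_{t=1}^n [t]_q`. -/
noncomputable def qFact (n : ℕ) : Polynomial ℂ :=
  ∏ t ∈ Finset.Icc 1 n, qInt t

lemma qInt_eval (t : ℕ) (ζ : ℂ) (hζ1 : ζ ≠ 1) : (qInt t).eval ζ = (ζ ^ t - 1) / (ζ - 1) := by
  simp [qInt, eval_finset_sum, geom_sum_eq hζ1]

lemma qInt_ne_zero {v : ℕ} (hv : v ≠ 0) : qInt v ≠ 0 := by
  intro h
  have : (qInt v).eval 1 = (v : ℂ) := by simp [qInt, eval_finset_sum]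
  rw [h] at this
  simp at this
  exact_mod_cast hv (by exact_mod_cast this.symm)

lemma qInt_mul (v s : ℕ) : qInt (v * s) = qInt v * ∑ i ∈ Finset.range s, ((X : Polynomial ℂ) ^ v) ^ i := by
  have hX : (X : Polynomial ℂ) - 1 ≠ 0 := X_sub_C_ne_zero 1
  apply mul_right_cancel₀ hX
  have h1 : qInt (v * s) * (X - 1) = (X : Polynomial ℂ) ^ (v * s) - 1 := geom_sum_mul _ _
  have h2 : qInt v * (X - 1) = (X : Polynomial ℂ) ^ v - 1 := geom_sum_mul _ _
  have h3 : (∑ i ∈ Finset.range s, ((X : Polynomial ℂ) ^ v) ^ i) * ((X : Polynomial ℂ) ^ v - 1)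
      = ((X : Polynomial ℂ) ^ v) ^ s - 1 := geom_sum_mul _ _
  calc qInt (v * s) * (X - 1) = (X : Polynomial ℂ) ^ (v * s) - 1 := h1
    _ = ((X : Polynomial ℂ) ^ v) ^ s - 1 := by rw [pow_mul]
    _ = (∑ i ∈ Finset.range s, ((X : Polynomial ℂ) ^ v) ^ i) * (qInt v * (X - 1)) := by
        rw [h2, h3]
    _ = qInt v * (∑ i ∈ Finset.range s, ((X : Polynomial ℂ) ^ v) ^ i) * (X - 1) := by ring

lemma qIntS_eval (v s : ℕ) (ζ : ℂ) (hζv : ζ ^ v = 1) :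
    (∑ i ∈ Finset.range s, ((X : Polynomial ℂ) ^ v) ^ i).eval ζ = (s : ℂ) := by
  simp [eval_finset_sum, hζv]

lemma qFact_factor (v : ℕ) (hv2 : 2 ≤ v) (ζ : ℂ) (hζv : ζ ^ v = 1) (hζ1 : ζ ≠ 1) (N : ℕ) :
    ∃ R : Polynomial ℂ, qFact N = qInt v ^ (N / v) * R ∧
      R.eval ζ = (N / v).factorial *
          (∏ r ∈ Finset.Icc 1 (v - 1), (qInt r).eval ζ) ^ (N / v) *
          ∏ r ∈ Finset.Icc 1 (N % v), (qInt r).eval ζ := by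
  have hv0 : 0 < v := by omega
  induction N with
  | zero =>
      refine ⟨1, by simp [qFact, Nat.zero_div], by simp [Nat.zero_div, Nat.zero_mod]⟩
  | succ N ih =>
      obtain ⟨R, hR, hRe⟩ := ih
      have hstep : qFact (N + 1) = qFact N * qInt (N + 1) := by
        rw [qFact, qFact, Finset.prod_Icc_succ_top (by omega)]
      by_cases hdvd : v ∣ N + 1
      · obtain ⟨s, hs⟩ := hdvd
        have hs1 : 1 ≤ s := by
          rcases Nat.eq_zero_or_pos s with h | h
          · subst h; simp at hs
          · exact h
        obtain ⟨t, rfl⟩ : ∃ t, s = t + 1 := ⟨s - 1, by omega⟩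
        have hvt : v * (t + 1) = v * t + v := by ring
        have hN : N = (v - 1) + v * t := by omega
        have hNd : N / v = t := by
          rw [hN, Nat.add_mul_div_left _ _ hv0, Nat.div_eq_of_lt (by omega), Nat.zero_add]
        have hNm : N % v = v - 1 := by
          rw [hN, Nat.add_mul_mod_self_left, Nat.mod_eq_of_lt (by omega)]
        have hN1d : (N + 1) / v = t + 1 := by
          rw [hs, Nat.mul_div_cancel_left _ hv0]
        have hN1m : (N + 1) % v = 0 := by
          rw [hs, Nat.mul_mod_right]
        refine ⟨R * ∑ i ∈ Finset.range (t + 1), ((X : Polynomial ℂ) ^ v) ^ i, ?_, ?_⟩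
        · rw [hN1d, hstep, hR, hNd, hs, qInt_mul, pow_succ]
          ring
        · rw [eval_mul, hRe, qIntS_eval v (t + 1) ζ hζv, hN1d, hN1m, hNd, hNm]
          simp only [Nat.factorial_succ]
          rw [show Finset.Icc 1 0 = (∅ : Finset ℕ) from rfl]
          push_cast
          rw [pow_succ]
          simp only [Finset.prod_empty]
          ring
      · have hlt : N % v < v := Nat.mod_lt _ hv0
        have h1 : (N + 1) % v = (N % v + 1) % v := by
          rw [Nat.add_mod, Nat.mod_eq_of_lt (show 1 < v by omega)]
        have hne : N % v + 1 ≠ v := by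
          intro h
          exact hdvd (Nat.dvd_of_mod_eq_zero (by rw [h1, h, Nat.mod_self]))
        have hN1m : (N + 1) % v = N % v + 1 := by
          rw [h1, Nat.mod_eq_of_lt (by omega)]
        have hN1d : (N + 1) / v = N / v := by
          rw [Nat.succ_div, if_neg hdvd, Nat.add_zero]
        have hq : (qInt (N + 1)).eval ζ = (qInt (N % v + 1)).eval ζ := by
          rw [qInt_eval _ _ hζ1, qInt_eval _ _ hζ1]
          congr 2
          conv_lhs => rw [← Nat.div_add_mod (N + 1) v]
          rw [pow_add, pow_mul, hζv, one_pow, one_mul, hN1m]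
        refine ⟨R * qInt (N + 1), ?_, ?_⟩
        · rw [hN1d, hstep, hR]
          ring
        · rw [eval_mul, hRe, hq, hN1d, hN1m, Finset.prod_Icc_succ_top (by omega)]
          ring

theorem stmt_17 (m : ℕ) (hm : 2 ≤ m)
    (ω : ℂ) (hω : ω = Complex.exp (2 * Real.pi * Complex.I / m))
    (j : ℕ) (hj1 : 1 ≤ j) (hj2 : j ≤ m - 1)
    (v : ℕ) (hv : v = m / Nat.gcd j m)
    (C : ℕ → Polynomial ℂ)
    (hC : ∀ n, C n * (qInt (n + 1) * (qFact n) ^ 2) = qFact (2 * n)) :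
    ∃ c₃ : ℝ, ∀ n : ℕ, 1 ≤ n →
      ‖(C n).eval (ω ^ j)‖ ≤
        c₃ * (Nat.choose (2 * (n / v) + 1) (n / v) : ℝ) := by
  have hgpos0 : 0 < Nat.gcd j m := Nat.gcd_pos_of_pos_left m (by omega)
  obtain ⟨G, hG⟩ : ∃ G, Nat.gcd j m = G := ⟨_, rfl⟩
  have hgpos : 0 < G := hG ▸ hgpos0
  obtain ⟨t, ht⟩ : ∃ t, m = G * t := hG ▸ Nat.gcd_dvd_right j m
  obtain ⟨j', hj'⟩ : ∃ j', j = G * j' := hG ▸ Nat.gcd_dvd_left j m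
  have hvt : v = t := by rw [hv, hG, ht, Nat.mul_div_cancel_left _ hgpos]
  have hgj : G ≤ j := Nat.le_of_dvd (by omega) ⟨j', hj'⟩
  have ht2 : 2 ≤ t := by
    rcases Nat.lt_or_ge t 2 with h | h
    · interval_cases t <;> omega
    · exact h
  have hv2 : 2 ≤ v := hvt ▸ ht2
  have hprm : IsPrimitiveRoot ω m := by
    rw [hω]; exact Complex.isPrimitiveRoot_exp m (by omega)
  set ζ := ω ^ j with hζdef
  have hζv : ζ ^ v = 1 := by
    rw [hζdef, ← pow_mul]
    exact (hprm.pow_eq_one_iff_dvd (j * v)).mpr ⟨j', by rw [hvt, ht, hj']; ring⟩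
  have hcop : Nat.Coprime j' t := by
    have h := Nat.coprime_div_gcd_div_gcd (m := j) (n := m) (by rw [hG]; exact hgpos)
    rw [hG, ht, hj', Nat.mul_div_cancel_left _ hgpos, Nat.mul_div_cancel_left _ hgpos] at h
    exact h
  have hprim' : ∀ r, 0 < r → r < v → ζ ^ r ≠ 1 := by
    intro r h0 hr hone
    rw [hζdef, ← pow_mul] at hone
    have hdvd := (hprm.pow_eq_one_iff_dvd (j * r)).mp hone
    rw [ht, hj'] at hdvd
    have h2 : t ∣ j' * r := (Nat.mul_dvd_mul_iff_left hgpos).mp (by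
      rw [← mul_assoc]; exact hdvd)
    have h3 : t ∣ r := (hcop.symm).dvd_of_dvd_mul_left h2
    have := Nat.le_of_dvd h0 h3
    omega
  have hζ1 : ζ ≠ 1 := by
    have := hprim' 1 one_pos (by omega)
    simpa using this
  have hv0 : 0 < v := by omega
  -- nonvanishing
  have hwne : ∀ r, 0 < r → r < v → (qInt r).eval ζ ≠ 0 := by
    intro r h0 hr
    rw [qInt_eval _ _ hζ1]
    exact div_ne_zero (sub_ne_zero.mpr (hprim' r h0 hr)) (sub_ne_zero.mpr hζ1)
  set Pk : ℕ → ℝ := fun k => ∏ r ∈ Finset.Icc 1 k, ‖(qInt r).eval ζ‖ with hPk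
  have habsprod : ∀ k, ‖∏ r ∈ Finset.Icc 1 k, (qInt r).eval ζ‖ = Pk k := by
    intro k; rw [hPk]; exact norm_prod _ _
  have hPkpos : ∀ k, k < v → 0 < Pk k := by
    intro k hk
    rw [hPk]
    apply Finset.prod_pos
    intro r hr
    rw [Finset.mem_Icc] at hr
    exact norm_pos_iff.mpr (hwne r (by omega) (by omega))
  have hPknn : ∀ k, 0 ≤ Pk k := by
    intro k; rw [hPk]; positivity
  set g : ℕ → ℝ := fun b => if b + 1 = v then Pk (v - 2) / Pk (v - 1)
      else Pk (2 * b) / (Pk b ^ 2 * ‖(qInt (b + 1)).eval ζ‖) with hg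
  have hgnn : ∀ b, 0 ≤ g b := by
    intro b
    rw [hg]
    dsimp only
    split
    · exact div_nonneg (hPknn _) (hPknn _)
    · apply div_nonneg (hPknn _)
      apply mul_nonneg (by positivity)
      exact norm_nonneg _
  refine ⟨∑ b ∈ Finset.range v, g b, ?_⟩
  intro n hn1
  have hbv : n % v < v := Nat.mod_lt _ hv0
  have hgle : g (n % v) ≤ ∑ b ∈ Finset.range v, g b :=
    Finset.single_le_sum (fun i _ => hgnn i) (Finset.mem_range.mpr hbv)
  suffices h : ‖(C n).eval ζ‖ ≤ g (n % v) * (Nat.choose (2 * (n / v) + 1) (n / v) : ℝ) by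
    exact h.trans (mul_le_mul_of_nonneg_right hgle (Nat.cast_nonneg _))
  obtain ⟨R₁, hR₁, hρ₁⟩ := qFact_factor v hv2 ζ hζv hζ1 n
  obtain ⟨R₂, hR₂, hρ₂⟩ := qFact_factor v hv2 ζ hζv hζ1 (2 * n)
  set a := n / v with ha
  set b := n % v with hb
  have hn : n = v * a + b := by rw [ha, hb]; exact (Nat.div_add_mod n v).symm
  have hI : qInt v ≠ 0 := qInt_ne_zero (by omega)
  have hfR1 : ‖R₁.eval ζ‖ = (a.factorial : ℝ) * Pk (v - 1) ^ a * Pk b := by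
    rw [hρ₁, norm_mul, norm_mul, norm_pow, Complex.norm_natCast, habsprod, habsprod]
  have hR1pos : 0 < ‖R₁.eval ζ‖ := by
    rw [hfR1]
    have h1 : (0:ℝ) < a.factorial := by exact_mod_cast a.factorial_pos
    exact mul_pos (mul_pos h1 (pow_pos (hPkpos (v - 1) (by omega)) a)) (hPkpos b (by omega))
  by_cases hbtop : b + 1 = v
  · have e2 : v * (a + 1) = v * a + v := by ring
    have hn1 : n + 1 = v * (a + 1) := by omega
    have e1 : v * (2 * a + 1) = 2 * (v * a) + v := by ring
    have h2n : 2 * n = (v - 2) + v * (2 * a + 1) := by omega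
    have h2nd : 2 * n / v = 2 * a + 1 := by
      rw [h2n, Nat.add_mul_div_left _ _ hv0, Nat.div_eq_of_lt (by omega), Nat.zero_add]
    have h2nm : 2 * n % v = v - 2 := by
      rw [h2n, Nat.add_mul_mod_self_left, Nat.mod_eq_of_lt (by omega)]
    rw [h2nd, h2nm] at hρ₂
    rw [h2nd] at hR₂
    have hfR2 : ‖R₂.eval ζ‖
        = ((2 * a + 1).factorial : ℝ) * Pk (v - 1) ^ (2 * a + 1) * Pk (v - 2) := by
      rw [hρ₂, norm_mul, norm_mul, norm_pow, Complex.norm_natCast, habsprod, habsprod]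
    have hq1 : qInt (n + 1) = qInt v * ∑ i ∈ Finset.range (a + 1), ((X : Polynomial ℂ) ^ v) ^ i := by
      rw [hn1, qInt_mul]
    have key : C n * ((∑ i ∈ Finset.range (a + 1), ((X : Polynomial ℂ) ^ v) ^ i) * R₁ ^ 2) = R₂ := by
      apply mul_right_cancel₀ (pow_ne_zero (2 * a + 1) hI)
      have h := hC n
      rw [hq1, hR₁, hR₂] at h
      linear_combination h
    have he := congrArg (Polynomial.eval ζ) key
    simp only [eval_mul, eval_pow] at he
    rw [qIntS_eval v (a + 1) ζ hζv] at he
    have habs := congrArg (‖·‖) he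
    simp only [norm_mul, norm_pow, Complex.norm_natCast] at habs
    rw [hfR1, hfR2] at habs
    have hgb : g b = Pk (v - 2) / Pk (v - 1) := by simp only [hg]; rw [if_pos hbtop]
    have hbval : b = v - 1 := by omega
    have hfact : ((2 * a + 1).factorial : ℝ)
        = ((2 * a + 1).choose a : ℝ) * a.factorial * ((a + 1) * a.factorial) := by
      have h := Nat.choose_mul_factorial_mul_factorial (show a ≤ 2 * a + 1 by omega)
      have h2 : 2 * a + 1 - a = a + 1 := by omega
      rw [h2, Nat.factorial_succ] at h
      exact_mod_cast h.symm
    have hf : (0:ℝ) < a.factorial := by exact_mod_cast a.factorial_pos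
    have hPv1 : 0 < Pk (v - 1) := hPkpos _ (by omega)
    have hPv2 : 0 < Pk (v - 2) := hPkpos _ (by omega)
    have hPb : 0 < Pk b := hPkpos _ (by omega)
    have hD : (0:ℝ) < ((a + 1 : ℕ) : ℝ) * ((a.factorial : ℝ) * Pk (v - 1) ^ a * Pk b) ^ 2 := by
      have hc : (0:ℝ) < ((a + 1 : ℕ) : ℝ) := by exact_mod_cast Nat.succ_pos a
      exact mul_pos hc (pow_pos (mul_pos (mul_pos hf (pow_pos hPv1 a)) hPb) 2)
    have hCval : ‖Polynomial.eval ζ (C n)‖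
        = ((2 * a + 1).factorial : ℝ) * Pk (v - 1) ^ (2 * a + 1) * Pk (v - 2)
          / (((a + 1 : ℕ) : ℝ) * ((a.factorial : ℝ) * Pk (v - 1) ^ a * Pk b) ^ 2) :=
      (eq_div_iff (ne_of_gt hD)).mpr habs
    apply le_of_eq
    rw [hCval, hgb, hbval, hfact]
    push_cast
    field_simp
    ring
  · have hq1 : (qInt (n + 1)).eval ζ = (qInt (b + 1)).eval ζ := by
      rw [qInt_eval _ _ hζ1, qInt_eval _ _ hζ1]
      congr 2
      rw [show n + 1 = v * a + (b + 1) from by omega, pow_add, pow_mul, hζv, one_pow, one_mul]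
    have hgb : g b = Pk (2 * b) / (Pk b ^ 2 * ‖(qInt (b + 1)).eval ζ‖) := by
      simp only [hg]; rw [if_neg hbtop]
    have hW : 0 < ‖(qInt (b + 1)).eval ζ‖ :=
      norm_pos_iff.mpr (hwne (b + 1) (by omega) (by omega))
    have hf : (0:ℝ) < a.factorial := by exact_mod_cast a.factorial_pos
    have hPv1 : 0 < Pk (v - 1) := hPkpos _ (by omega)
    have hPb : 0 < Pk b := hPkpos _ (by omega)
    by_cases h2b : 2 * b < v
    · have e1 : v * (2 * a) = 2 * (v * a) := by ring
      have h2n : 2 * n = 2 * b + v * (2 * a) := by omega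
      have h2nd : 2 * n / v = 2 * a := by
        rw [h2n, Nat.add_mul_div_left _ _ hv0, Nat.div_eq_of_lt h2b, Nat.zero_add]
      have h2nm : 2 * n % v = 2 * b := by
        rw [h2n, Nat.add_mul_mod_self_left, Nat.mod_eq_of_lt h2b]
      rw [h2nd, h2nm] at hρ₂
      rw [h2nd] at hR₂
      have hfR2 : ‖R₂.eval ζ‖
          = ((2 * a).factorial : ℝ) * Pk (v - 1) ^ (2 * a) * Pk (2 * b) := by
        rw [hρ₂, norm_mul, norm_mul, norm_pow, Complex.norm_natCast, habsprod, habsprod]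
      have key : C n * (qInt (n + 1) * R₁ ^ 2) = R₂ := by
        apply mul_right_cancel₀ (pow_ne_zero (2 * a) hI)
        have h := hC n
        rw [hR₁, hR₂] at h
        linear_combination h
      have he := congrArg (Polynomial.eval ζ) key
      simp only [eval_mul, eval_pow] at he
      rw [hq1] at he
      have habs := congrArg (‖·‖) he
      simp only [norm_mul, norm_pow] at habs
      rw [hfR1, hfR2] at habs
      have hP2b : 0 < Pk (2 * b) := hPkpos _ (by omega)
      have hD : (0:ℝ) < ‖(qInt (b + 1)).eval ζ‖
          * ((a.factorial : ℝ) * Pk (v - 1) ^ a * Pk b) ^ 2 :=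
        mul_pos hW (pow_pos (mul_pos (mul_pos hf (pow_pos hPv1 a)) hPb) 2)
      have hCval : ‖Polynomial.eval ζ (C n)‖
          = ((2 * a).factorial : ℝ) * Pk (v - 1) ^ (2 * a) * Pk (2 * b)
            / (‖(qInt (b + 1)).eval ζ‖
              * ((a.factorial : ℝ) * Pk (v - 1) ^ a * Pk b) ^ 2) :=
        (eq_div_iff (ne_of_gt hD)).mpr habs
      have hfact : ((2 * a).factorial : ℝ)
          = ((2 * a).choose a : ℝ) * a.factorial * a.factorial := by
        have h := Nat.choose_mul_factorial_mul_factorial (show a ≤ 2 * a by omega)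
        have h2 : 2 * a - a = a := by omega
        rw [h2] at h
        exact_mod_cast h.symm
      have heq : ((2 * a).factorial : ℝ) * Pk (v - 1) ^ (2 * a) * Pk (2 * b)
            / (‖(qInt (b + 1)).eval ζ‖
              * ((a.factorial : ℝ) * Pk (v - 1) ^ a * Pk b) ^ 2)
          = ((2 * a).choose a : ℝ)
            * (Pk (2 * b) / (Pk b ^ 2 * ‖(qInt (b + 1)).eval ζ‖)) := by
        rw [hfact]
        field_simp
        ring
      have hmono : ((2 * a).choose a : ℝ) ≤ ((2 * a + 1).choose a : ℝ) := by
        exact_mod_cast Nat.choose_le_choose a (by omega)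
      have hX : (0:ℝ) ≤ Pk (2 * b) / (Pk b ^ 2 * ‖(qInt (b + 1)).eval ζ‖) :=
        div_nonneg (le_of_lt hP2b) (le_of_lt (mul_pos (pow_pos hPb 2) hW))
      rw [hCval, hgb, heq]
      calc ((2 * a).choose a : ℝ) * (Pk (2 * b) / (Pk b ^ 2 * ‖(qInt (b + 1)).eval ζ‖))
          ≤ ((2 * a + 1).choose a : ℝ)
            * (Pk (2 * b) / (Pk b ^ 2 * ‖(qInt (b + 1)).eval ζ‖)) :=
            mul_le_mul_of_nonneg_right hmono hX
        _ = (Pk (2 * b) / (Pk b ^ 2 * ‖(qInt (b + 1)).eval ζ‖))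
            * ((2 * a + 1).choose a : ℝ) := mul_comm _ _
    · have e1 : v * (2 * a + 1) = 2 * (v * a) + v := by ring
      have h2n : 2 * n = (2 * b - v) + v * (2 * a + 1) := by omega
      have h2nd : 2 * n / v = 2 * a + 1 := by
        rw [h2n, Nat.add_mul_div_left _ _ hv0, Nat.div_eq_of_lt (by omega), Nat.zero_add]
      rw [h2nd] at hR₂
      have key : C n * (qInt (n + 1) * R₁ ^ 2) = qInt v * R₂ := by
        apply mul_right_cancel₀ (pow_ne_zero (2 * a) hI)
        have h := hC n
        rw [hR₁, hR₂] at h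
        linear_combination h
      have he := congrArg (Polynomial.eval ζ) key
      simp only [eval_mul, eval_pow] at he
      have hzv : (qInt v).eval ζ = 0 := by
        rw [qInt_eval _ _ hζ1, hζv, sub_self, zero_div]
      rw [hzv, zero_mul, hq1] at he
      have hWne : (qInt (b + 1)).eval ζ ≠ 0 := hwne (b + 1) (by omega) (by omega)
      have hR1ne : R₁.eval ζ ≠ 0 := norm_pos_iff.mp hR1pos
      have hC0 : (C n).eval ζ = 0 := by
        rcases mul_eq_zero.mp he with h | h
        · exact h
        · rcases mul_eq_zero.mp h with h' | h'
          · exact absurd h' hWne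
          · exact absurd (pow_eq_zero_iff (by norm_num) |>.mp h') hR1ne
      rw [hC0, norm_zero]
      exact mul_nonneg (hgnn b) (Nat.cast_nonneg _)
end

section
/- For m ≥ 2, ω = e^{2πi/m}, and 1 ≤ j ≤ m−1, the quotient C_n(ω^j)/C_n(1) tends to 0 as n → ∞, where C_n(q) is the q-Catalan polynomial and C_n(1) = C(2n,n)/(n+1). -/
open Finset Polynomial Complex Filter Topology

noncomputable def gp (v a : ℕ) : Polynomial ℂ := ∑ i ∈ Finset.range a, (Polynomial.X ^ v) ^ i

noncomputable def Rp (v k : ℕ) : Polynomial ℂ := if v ∣ k then gp v (k / v) else qInt k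

noncomputable def tv (v : ℕ) (z : ℂ) (k : ℕ) : ℂ := if v ∣ k then 1 else (qInt k).eval z

lemma qInt_mul_s18 (t : ℕ) : qInt t * (Polynomial.X - 1) = Polynomial.X ^ t - 1 := by
  simpa [qInt] using geom_sum_mul (Polynomial.X : Polynomial ℂ) t

lemma qInt_eval_one (t : ℕ) : (qInt t).eval 1 = t := by
  simp [qInt]

lemma qInt_ne_zero_s18 {t : ℕ} (h : 1 ≤ t) : qInt t ≠ 0 := by
  intro hc
  have := qInt_eval_one t
  rw [hc, Polynomial.eval_zero] at this
  exact Nat.cast_ne_zero.2 (by omega) this.symm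

lemma qFact_Ioc (n : ℕ) : qFact n = ∏ t ∈ Finset.Ioc 0 n, qInt t := by
  rw [qFact, ← Finset.Icc_add_one_left_eq_Ioc, zero_add]

lemma qFact_ne_zero (n : ℕ) : qFact n ≠ 0 := by
  rw [qFact]
  exact Finset.prod_ne_zero_iff.2 fun t ht => qInt_ne_zero_s18 (Finset.mem_Icc.1 ht).1

lemma qFact_add (n w : ℕ) : qFact (n + w) = qFact n * ∏ k ∈ Finset.Ioc n (n + w), qInt k := by
  rw [qFact_Ioc, qFact_Ioc, Finset.prod_Ioc_consecutive _ (Nat.zero_le n) (Nat.le_add_right n w)]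

lemma qInt_of_dvd {v : ℕ} (hv : 0 < v) {k : ℕ} (h : v ∣ k) : qInt k = qInt v * gp v (k / v) := by
  have hX : (Polynomial.X - 1 : Polynomial ℂ) ≠ 0 := by
    intro hc
    have := congrArg (Polynomial.eval 0) hc
    simp at this
  apply mul_right_cancel₀ hX
  obtain ⟨c, rfl⟩ := h
  rw [Nat.mul_div_cancel_left c hv]
  calc qInt (v * c) * (Polynomial.X - 1) = Polynomial.X ^ (v * c) - 1 := qInt_mul_s18 _
    _ = ((Polynomial.X ^ v) ^ c - 1) := by rw [← pow_mul]
    _ = gp v c * (Polynomial.X ^ v - 1) := (geom_sum_mul _ c).symm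
    _ = gp v c * (qInt v * (Polynomial.X - 1)) := by rw [qInt_mul_s18]
    _ = qInt v * gp v c * (Polynomial.X - 1) := by ring

lemma qInt_eq_ite {v : ℕ} (hv : 0 < v) (k : ℕ) :
    qInt k = (if v ∣ k then qInt v else 1) * Rp v k := by
  unfold Rp
  split_ifs with h
  · exact qInt_of_dvd hv h
  · rw [one_mul]

section eval
variable {v : ℕ} {z : ℂ} (hv : 2 ≤ v) (hz : ∀ k, z ^ k = 1 ↔ v ∣ k)

include hv hz in
lemma z_ne_one : z ≠ 1 := by
  intro h
  have := (hz 1).1 (by rw [h, one_pow])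
  have := Nat.le_of_dvd one_pos this
  omega

include hv hz in
lemma eval_qInt (k : ℕ) : (qInt k).eval z = (z ^ k - 1) / (z - 1) := by
  have hz1 : z - 1 ≠ 0 := sub_ne_zero.2 (z_ne_one hv hz)
  rw [eq_div_iff hz1]
  have := congrArg (Polynomial.eval z) (geom_sum_mul (Polynomial.X : Polynomial ℂ) k)
  simpa [qInt] using this

include hv hz in
lemma eval_qInt_shift (k : ℕ) : (qInt (k + v)).eval z = (qInt k).eval z := by
  rw [eval_qInt hv hz, eval_qInt hv hz, pow_add, (hz v).2 dvd_rfl, mul_one]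

include hv hz in
lemma eval_qInt_ne_zero {k : ℕ} (h : ¬ v ∣ k) : (qInt k).eval z ≠ 0 := by
  rw [eval_qInt hv hz]
  exact div_ne_zero (sub_ne_zero.2 fun hc => h ((hz k).1 hc)) (sub_ne_zero.2 (z_ne_one hv hz))

include hz in
lemma eval_gp (a : ℕ) : (gp v a).eval z = a := by
  simp only [gp, Polynomial.eval_finset_sum, Polynomial.eval_pow, Polynomial.eval_X,
    (hz v).2 dvd_rfl, one_pow]
  simp

include hv in
lemma window_prod (F : ℕ → ℂ) (hF : ∀ k, F (k + v) = F k) (s : ℕ) :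
    ∏ k ∈ Finset.Ioc s (s + v), F k = ∏ k ∈ Finset.Ioc 0 v, F k := by
  induction s with
  | zero => simp
  | succ s ih =>
    have e1 : Finset.Ioc s (s+1) = {s+1} := by ext x; simp [Finset.mem_Ioc]
    have e2 : Finset.Ioc (s+v) (s+v+1) = {s+v+1} := by ext x; simp [Finset.mem_Ioc]
    have hA := Finset.prod_Ioc_consecutive F (show s+1 ≤ s+v by omega) (show s+v ≤ s+v+1 by omega)
    have hB := Finset.prod_Ioc_consecutive F (show s ≤ s+1 by omega) (show s+1 ≤ s+v by omega)
    rw [e2, Finset.prod_singleton] at hA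
    rw [e1, Finset.prod_singleton] at hB
    have hFs : F (s+v+1) = F (s+1) := by rw [show s+v+1 = (s+1)+v by omega, hF]
    calc ∏ k ∈ Finset.Ioc (s+1) (s+1+v), F k
        = ∏ k ∈ Finset.Ioc (s+1) (s+v+1), F k := by rw [show s+1+v = s+v+1 by omega]
      _ = (∏ k ∈ Finset.Ioc (s+1) (s+v), F k) * F (s+v+1) := hA.symm
      _ = F (s+1) * ∏ k ∈ Finset.Ioc (s+1) (s+v), F k := by rw [hFs]; ring
      _ = ∏ k ∈ Finset.Ioc s (s+v), F k := hB
      _ = ∏ k ∈ Finset.Ioc 0 v, F k := ih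

lemma filter_dvd_window (hv0 : 0 < v) (s : ℕ) :
    (Finset.Ioc s (s + v)).filter (fun k => v ∣ k) = {v * (s / v + 1)} := by
  ext k
  simp only [Finset.mem_filter, Finset.mem_Ioc, Finset.mem_singleton]
  constructor
  · rintro ⟨⟨h1, h2⟩, c, rfl⟩
    have hc1 : s / v < c := by
      rw [Nat.div_lt_iff_lt_mul hv0, mul_comm]; exact h1
    have hc2 : c ≤ s / v + 1 := by
      have h3 : c * v ≤ s + v := by rw [mul_comm]; exact h2
      have h4 : c ≤ (s + v) / v := (Nat.le_div_iff_mul_le hv0).2 h3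
      rwa [Nat.add_div_right s hv0] at h4
    have : c = s / v + 1 := by omega
    rw [this]
  · rintro rfl
    refine ⟨⟨?_, ?_⟩, Dvd.intro _ rfl⟩
    · calc s = v * (s / v) + s % v := (Nat.div_add_mod s v).symm
        _ < v * (s / v) + v := Nat.add_lt_add_left (Nat.mod_lt s hv0) _
        _ = v * (s / v + 1) := by ring
    · have h5 := Nat.div_mul_le_self s v
      calc v * (s / v + 1) = s / v * v + v := by ring
        _ ≤ s + v := by omega

lemma window_qInt (hv0 : 0 < v) (s : ℕ) :
    ∏ k ∈ Finset.Ioc s (s + v), qInt k = qInt v * ∏ k ∈ Finset.Ioc s (s + v), Rp v k := by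
  rw [Finset.prod_congr rfl (fun k _ => qInt_eq_ite hv0 k), Finset.prod_mul_distrib]
  congr 1
  rw [← Finset.prod_filter, filter_dvd_window hv0 s, Finset.prod_singleton]

include hv hz in
lemma tv_periodic (k : ℕ) : tv v z (k + v) = tv v z k := by
  unfold tv
  by_cases h : v ∣ k
  · rw [if_pos h, if_pos (Nat.dvd_add_self_right.2 h)]
  · rw [if_neg h, if_neg (fun hc => h (Nat.dvd_add_self_right.1 hc)), eval_qInt_shift hv hz]

include hv hz in
lemma tv_ne_zero (k : ℕ) : tv v z k ≠ 0 := by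
  unfold tv
  split_ifs with h
  · exact one_ne_zero
  · exact eval_qInt_ne_zero hv hz h

include hv hz in
lemma eval_window (s : ℕ) :
    Polynomial.eval z (∏ k ∈ Finset.Ioc s (s + v), Rp v k)
      = ((s / v + 1 : ℕ) : ℂ) * ∏ k ∈ Finset.Ioc 0 v, tv v z k := by
  rw [Polynomial.eval_prod]
  have hpt : ∀ k, (Rp v k).eval z
      = (if v ∣ k then ((k / v : ℕ) : ℂ) else 1) * tv v z k := by
    intro k
    unfold Rp tv
    split_ifs with h
    · rw [eval_gp hz, mul_one]
    · rw [one_mul]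
  rw [Finset.prod_congr rfl (fun k _ => hpt k), Finset.prod_mul_distrib]
  congr 1
  · rw [← Finset.prod_filter, filter_dvd_window (by omega) s, Finset.prod_singleton,
      Nat.mul_div_cancel_left _ (show 0 < v by omega)]
  · exact window_prod hv (tv v z) (tv_periodic hv hz) s

end eval

lemma two_mul_div_le {v : ℕ} (hv0 : 0 < v) (n : ℕ) : 2 * n / v ≤ 2 * (n / v) + 1 := by
  have h : 2 * n / v < 2 * (n / v) + 2 := by
    rw [Nat.div_lt_iff_lt_mul hv0]
    have h1 : v * (n / v) + n % v = n := Nat.div_add_mod n v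
    have h2 : n % v < v := Nat.mod_lt n hv0
    nlinarith
  omega
lemma key_recursion {v : ℕ} {z : ℂ} (hv : 2 ≤ v) (hz : ∀ k, z ^ k = 1 ↔ v ∣ k)
    (C : ℕ → Polynomial ℂ)
    (hC : ∀ n, C n * (qInt (n + 1) * (qFact n) ^ 2) = qFact (2 * n)) (n : ℕ) :
    ‖(C (n + v)).eval z‖ ≤ 6 * ‖(C n).eval z‖ := by
  have hv0 : 0 < v := by omega
  have hv1 : (1:ℕ) ≤ v := by omega
  set ι : Polynomial ℂ := if v ∣ (n+1) then qInt v else 1 with hιdef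
  have hιne : ι ≠ 0 := by
    rw [hιdef]; split_ifs; exacts [qInt_ne_zero_s18 hv1, one_ne_zero]
  have hu1 : qInt (n+1) = ι * Rp v (n+1) := by
    rw [hιdef]; exact qInt_eq_ite hv0 (n+1)
  have hu2 : qInt (n+v+1) = ι * Rp v (n+v+1) := by
    rw [qInt_eq_ite hv0 (n+v+1), hιdef]
    by_cases h : v ∣ (n+1)
    · rw [if_pos h, if_pos (show v ∣ n+v+1 by
        rw [show n+v+1 = (n+1)+v by ring]; exact Nat.dvd_add_self_right.2 h)]
    · rw [if_neg h, if_neg (show ¬ v ∣ n+v+1 by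
        rw [show n+v+1 = (n+1)+v by ring]
        exact fun hc => h (Nat.dvd_add_self_right.1 hc))]
  have star : (C (n+v) * Rp v (n+v+1) * (∏ k ∈ Finset.Ioc n (n+v), Rp v k)^2)
        * (ι * qInt v^2 * qFact n ^ 2)
      = (C n * Rp v (n+1) * ((∏ k ∈ Finset.Ioc (2*n) (2*n+v), Rp v k)
          * (∏ k ∈ Finset.Ioc (2*n+v) (2*n+v+v), Rp v k)))
        * (ι * qInt v^2 * qFact n ^ 2) := by
    have h2' := hC (n+v)
    rw [show 2*(n+v) = 2*n+v+v by ring] at h2'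
    rw [qFact_add (2*n+v) v, qFact_add (2*n) v, window_qInt hv0 (2*n),
      window_qInt hv0 (2*n+v), qFact_add n v, window_qInt hv0 n, ← hC n, hu2, hu1] at h2'
    linear_combination h2'
  have hcan := mul_right_cancel₀ (mul_ne_zero (mul_ne_zero hιne
    (pow_ne_zero 2 (qInt_ne_zero_s18 hv1))) (pow_ne_zero 2 (qFact_ne_zero n))) star
  -- evaluate at z
  have hev := congrArg (Polynomial.eval z) hcan
  simp only [Polynomial.eval_mul, Polynomial.eval_pow] at hev
  rw [eval_window hv hz n, eval_window hv hz (2*n), eval_window hv hz (2*n+v),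
    Nat.add_div_right (2*n) hv0] at hev
  rw [show 2*n/v + 1 + 1 = 2*n/v + 2 by ring] at hev
  set a := n / v with ha
  set A := 2*n / v with hA
  set W := ∏ k ∈ Finset.Ioc 0 v, tv v z k with hW
  have hWne : W ≠ 0 := Finset.prod_ne_zero_iff.2 fun k _ => tv_ne_zero hv hz k
  set e₁ := (Rp v (n+1)).eval z with hE₁d
  set e₂ := (Rp v (n+v+1)).eval z with hE₂d
  set x := (C (n+v)).eval z with hxd
  set y := (C n).eval z with hyd
  have hnum : x * e₂ * ((a+1 : ℕ):ℂ)^2 = y * e₁ * (((A+1 : ℕ):ℂ) * ((A+2:ℕ):ℂ)) := by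
    apply mul_right_cancel₀ (pow_ne_zero 2 hWne)
    linear_combination hev
  obtain ⟨he2, he12⟩ : e₂ ≠ 0 ∧ ‖e₁‖ ≤ ‖e₂‖ := by
    by_cases hcase : v ∣ (n+1)
    · have hd2 : v ∣ n+v+1 := by
        rw [show n+v+1 = (n+1)+v by ring]; exact Nat.dvd_add_self_right.2 hcase
      have hE1 : e₁ = (((n+1)/v : ℕ):ℂ) := by
        rw [hE₁d]; unfold Rp; rw [if_pos hcase, eval_gp hz]
      have hE2 : e₂ = (((n+1)/v + 1 : ℕ):ℂ) := by
        rw [hE₂d]; unfold Rp; rw [if_pos hd2, eval_gp hz]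
        congr 1
        rw [show n+v+1 = (n+1)+v by ring, Nat.add_div_right _ hv0]
      constructor
      · rw [hE2]; exact Nat.cast_ne_zero.2 (Nat.succ_ne_zero _)
      · rw [hE1, hE2, RCLike.norm_natCast, RCLike.norm_natCast]
        exact_mod_cast Nat.le_succ _
    · have hd2 : ¬ v ∣ n+v+1 := fun hc => hcase (by
        rw [show n+v+1 = (n+1)+v by ring] at hc
        exact Nat.dvd_add_self_right.1 hc)
      have hE1 : e₁ = (qInt (n+1)).eval z := by
        rw [hE₁d]; unfold Rp; rw [if_neg hcase]
      have hE2 : e₂ = (qInt (n+1)).eval z := by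
        rw [hE₂d]; unfold Rp
        rw [if_neg hd2, show n+v+1 = (n+1)+v by ring, eval_qInt_shift hv hz]
      exact ⟨hE2 ▸ eval_qInt_ne_zero hv hz hcase, by rw [hE1, hE2]⟩
  have hAa : A ≤ 2*a + 1 := two_mul_div_le hv0 n
  have hbound : (A+1) * (A+2) ≤ 6 * (a+1)^2 := by nlinarith
  have hb' : ((A+1 : ℕ):ℝ) * ((A+2:ℕ):ℝ) ≤ 6 * ((a+1:ℕ):ℝ)^2 := by exact_mod_cast hbound
  have hnn := congrArg Norm.norm hnum
  simp only [norm_mul, norm_pow, RCLike.norm_natCast] at hnn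
  have h2pos : 0 < ‖e₂‖ := norm_pos_iff.2 he2
  have hy0 : (0:ℝ) ≤ ‖y‖ := norm_nonneg y
  have hppos : (0:ℝ) < ((a+1:ℕ):ℝ) := by exact_mod_cast Nat.succ_pos a
  have c1 : ‖y‖ * ‖e₁‖ * (((A+1:ℕ):ℝ) * ((A+2:ℕ):ℝ)) ≤ ‖y‖ * ‖e₂‖ * (6*((a+1:ℕ):ℝ)^2) :=
    mul_le_mul (mul_le_mul_of_nonneg_left he12 hy0) hb' (by positivity) (by positivity)
  have c2 : ‖x‖ * (‖e₂‖ * ((a+1:ℕ):ℝ)^2) ≤ (6*‖y‖) * (‖e₂‖ * ((a+1:ℕ):ℝ)^2) := by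
    calc ‖x‖ * (‖e₂‖ * ((a+1:ℕ):ℝ)^2) = ‖x‖ * ‖e₂‖ * ((a+1:ℕ):ℝ)^2 := by ring
      _ = ‖y‖ * ‖e₁‖ * (((A+1:ℕ):ℝ) * ((A+2:ℕ):ℝ)) := hnn
      _ ≤ ‖y‖ * ‖e₂‖ * (6*((a+1:ℕ):ℝ)^2) := c1
      _ = (6*‖y‖) * (‖e₂‖ * ((a+1:ℕ):ℝ)^2) := by ring
  exact le_of_mul_le_mul_right c2 (by positivity)

noncomputable def Dfun (n : ℕ) : ℝ := ((2*n).choose n : ℝ) / ((n:ℝ)+1)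

lemma Dfun_pos (n : ℕ) : 0 < Dfun n := by
  unfold Dfun
  have := Nat.choose_pos (show n ≤ 2*n by omega)
  positivity

lemma Dfun_step {n : ℕ} (h : 4 ≤ n) : 3 * Dfun n ≤ Dfun (n+1) := by
  have hnat : 3 * ((2*n).choose n) * (n+2) ≤ (2*(n+1)).choose (n+1) * (n+1) := by
    have h1 : (n+1) * Nat.centralBinom (n+1) = 2*(2*n+1) * Nat.centralBinom n :=
      Nat.succ_mul_centralBinom_succ n
    have hcb : Nat.centralBinom n = (2*n).choose n := rfl
    have hcb1 : Nat.centralBinom (n+1) = (2*(n+1)).choose (n+1) := rfl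
    rw [hcb, hcb1] at h1
    nlinarith [Nat.choose_pos (show n ≤ 2*n by omega)]
  unfold Dfun
  rw [← mul_div_assoc, div_le_div_iff₀ (by positivity) (by positivity)]
  have hreal : (3:ℝ) * ((2*n).choose n : ℝ) * ((n:ℝ)+2) ≤ ((2*(n+1)).choose (n+1) : ℝ) * ((n:ℝ)+1) := by
    exact_mod_cast hnat
  push_cast
  linarith [hreal]

lemma Dfun_grow' (k : ℕ) : ∀ n, 4 ≤ n → 3^k * Dfun n ≤ Dfun (n+k) := by
  induction k with
  | zero => intro n _; simp
  | succ k ih =>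
    intro n hn
    have h1 := ih n hn
    have h2 := Dfun_step (show 4 ≤ n + k by omega)
    calc 3^(k+1) * Dfun n = 3 * (3^k * Dfun n) := by ring
      _ ≤ 3 * Dfun (n+k) := by linarith
      _ ≤ Dfun (n+k+1) := h2
      _ = Dfun (n+(k+1)) := by rw [Nat.add_assoc]

lemma Dfun_grow {v n : ℕ} (hv : 2 ≤ v) (h : 4 ≤ n) : 9 * Dfun n ≤ Dfun (n+v) := by
  have h1 := Dfun_grow' v n h
  have h2 : (9:ℝ) ≤ 3^v := by
    calc (9:ℝ) = 3^2 := by norm_num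
      _ ≤ 3^v := pow_le_pow_right₀ (by norm_num) hv
  nlinarith [(Dfun_pos n).le, Dfun_pos n]


theorem stmt_18 (m : ℕ) (hm : 2 ≤ m)
    (ω : ℂ) (hω : ω = Complex.exp (2 * Real.pi * Complex.I / m))
    (j : ℕ) (hj1 : 1 ≤ j) (hj2 : j ≤ m - 1)
    (C : ℕ → Polynomial ℂ)
    (hC : ∀ n, C n * (qInt (n + 1) * (qFact n) ^ 2) = qFact (2 * n)) :
    Tendsto (fun n => (C n).eval (ω ^ j) / ((Nat.choose (2 * n) n : ℂ) / ((n : ℂ) + 1)))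
      atTop (𝓝 0) := by
  have hm0 : (m:ℕ) ≠ 0 := by omega
  have hωprim : IsPrimitiveRoot ω m := by
    rw [hω]; exact Complex.isPrimitiveRoot_exp m hm0
  set z := ω ^ j with hzdef
  have hzm : z ^ m = 1 := by
    rw [hzdef, ← pow_mul, mul_comm, pow_mul, hωprim.pow_eq_one, one_pow]
  have hzne1 : z ≠ 1 := by
    intro h
    have hd := (hωprim.pow_eq_one_iff_dvd j).1 h
    have := Nat.le_of_dvd (by omega) hd
    omega
  have hfin : IsOfFinOrder z := isOfFinOrder_iff_pow_eq_one.2 ⟨m, by omega, hzm⟩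
  set v := orderOf z with hvdef
  have hz : ∀ k, z ^ k = 1 ↔ v ∣ k := fun k => orderOf_dvd_iff_pow_eq_one.symm
  have hv : 2 ≤ v := by
    have h0 : v ≠ 0 := fun hc => by
      rw [hvdef] at hc
      exact (orderOf_eq_zero_iff.1 hc) hfin
    have h1 : v ≠ 1 := fun hc => hzne1 (orderOf_eq_one_iff.1 hc)
    omega
  have hv0 : 0 < v := by omega
  -- the sequence r
  set r : ℕ → ℝ := fun n => ‖(C n).eval z‖ / Dfun n with hrdef
  have hr_nonneg : ∀ n, 0 ≤ r n := fun n => div_nonneg (norm_nonneg _) (Dfun_pos n).le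
  have hkey : ∀ n, ‖(C (n+v)).eval z‖ ≤ 6 * ‖(C n).eval z‖ :=
    key_recursion hv hz C hC
  have hstep : ∀ n, 4 ≤ n → r (n+v) ≤ (2/3) * r n := by
    intro n hn
    have h1 : r (n+v) ≤ (6 * ‖(C n).eval z‖) / (9 * Dfun n) := by
      rw [hrdef]
      exact div_le_div₀ (by positivity) (hkey n) (by linarith [Dfun_pos n]) (Dfun_grow hv hn)
    have h2 : (6 * ‖(C n).eval z‖) / (9 * Dfun n) = (2/3) * r n := by
      rw [hrdef]
      have := (Dfun_pos n).ne'
      field_simp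
      ring
    linarith [h1, h2]
  set M : ℝ := ∑ i ∈ Finset.range v, r (4+i) with hMdef
  have hM : ∀ s, s < v → r (4+s) ≤ M := fun s hs =>
    Finset.single_le_sum (fun i _ => hr_nonneg (4+i)) (Finset.mem_range.2 hs)
  have hbound : ∀ n, r (n+4) ≤ M * (2/3)^(n/v) := by
    intro n
    induction n using Nat.strong_induction_on with
    | _ n ih =>
      by_cases hn : n < v
      · rw [Nat.div_eq_of_lt hn, pow_zero, mul_one, show n+4 = 4+n by omega]
        exact hM n hn
      · push_neg at hn
        have h2 : r (n+4) ≤ (2/3) * r (n - v + 4) := by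
          have := hstep (n-v+4) (by omega)
          rwa [show n-v+4+v = n+4 by omega] at this
        have h3 : r (n-v+4) ≤ M * (2/3)^((n-v)/v) := ih (n-v) (by omega)
        have h4 : n/v = (n-v)/v + 1 := Nat.div_eq_sub_div hv0 hn
        calc r (n+4) ≤ (2/3) * r (n-v+4) := h2
          _ ≤ (2/3) * (M * (2/3)^((n-v)/v)) := by
              apply mul_le_mul_of_nonneg_left h3 (by norm_num)
          _ = M * (2/3)^((n-v)/v + 1) := by ring
          _ = M * (2/3)^(n/v) := by rw [h4]
  have hpow : Tendsto (fun n : ℕ => M * (2/3:ℝ)^(n/v)) atTop (𝓝 0) := by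
    have h1 : Tendsto (fun k : ℕ => (2/3:ℝ)^k) atTop (𝓝 0) :=
      tendsto_pow_atTop_nhds_zero_of_lt_one (by norm_num) (by norm_num)
    have h2 : Tendsto (fun n : ℕ => n / v) atTop atTop :=
      tendsto_atTop_atTop.2 fun b => ⟨b*v, fun n hn => (Nat.le_div_iff_mul_le hv0).2 hn⟩
    have h3 := (h1.comp h2).const_mul M
    simpa using h3
  have hr4 : Tendsto (fun n => r (n+4)) atTop (𝓝 0) :=
    squeeze_zero (fun n => hr_nonneg (n+4)) hbound hpow
  have hr : Tendsto r atTop (𝓝 0) := by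
    rwa [tendsto_add_atTop_iff_nat 4] at hr4
  rw [tendsto_zero_iff_norm_tendsto_zero]
  have heq : ∀ n : ℕ, ‖(C n).eval z / ((Nat.choose (2 * n) n : ℂ) / ((n : ℂ) + 1))‖ = r n := by
    intro n
    rw [norm_div, norm_div, hrdef]
    congr 1
    unfold Dfun
    rw [RCLike.norm_natCast]
    congr 1
    rw [show ((n:ℂ) + 1) = ((n+1 : ℕ) : ℂ) by push_cast; ring, RCLike.norm_natCast]
    push_cast
    ring
  exact (tendsto_congr heq).2 hr
end
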